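/- arXiv:2406.07455 — 4 statements merged into one kernel-verified Lean document; each statement's English description precedes it below -/
import Mathlib

section
/- Fix an integer H ≥ 1 and define α_t = (H+1)/(H+t) for integers t ≥ 1, α_t^0 = ∏_{j=1}^t (1 − α_j), and α_t^i = α_i · ∏_{j=i+1}^t (1 − α_j) for integers 1 ≤ i ≤ t (empty products equal 1). Then for every integer t ≥ 1: 1/√t ≤ ∑_{i=1}^t α_t^i/√i ≤ 2/√t. -/
open Finset

/-- Step size `α_t = (H+1)/(H+t)`. -/
noncomputable def lr (H t : ℕ) : ℝ := (H + 1) / (H + t)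

/-- Learning-rate weights `α_t^0 = ∏_{j=1}^t (1 - α_j)` and
`α_t^i = α_i ∏_{j=i+1}^t (1 - α_j)` for `i ≥ 1`. -/
noncomputable def lrW (H t i : ℕ) : ℝ :=
  if i = 0 then ∏ j ∈ Finset.Icc 1 t, (1 - lr H j)
  else lr H i * ∏ j ∈ Finset.Icc (i + 1) t, (1 - lr H j)

lemma lr_succ_eq (H t : ℕ) (hH : 1 ≤ H) :
    lr H (t + 1) = ((H : ℝ) + 1) / ((H : ℝ) + t + 1) := by
  have : (1:ℝ) ≤ (H:ℝ) := by exact_mod_cast hH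
  simp [lr]
  ring_nf

/-- Property (2) of the learning-rate weights: for every `t ≥ 1`,
`1/√t ≤ ∑_{i=1}^t α_t^i / √i ≤ 2/√t`. -/
theorem stmt_4 (H : ℕ) (hH : 1 ≤ H) (t : ℕ) (ht : 1 ≤ t) :
    1 / Real.sqrt t ≤ ∑ i ∈ Finset.Icc 1 t, lrW H t i / Real.sqrt i
      ∧ ∑ i ∈ Finset.Icc 1 t, lrW H t i / Real.sqrt i ≤ 2 / Real.sqrt t := by
  have hH1 : (1:ℝ) ≤ (H:ℝ) := by exact_mod_cast hH
  induction t, ht using Nat.le_induction with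
  | base =>
    have h1 : lrW H 1 1 = 1 := by
      have hne : ((H:ℝ) + 1) ≠ 0 := by positivity
      simp [lrW, lr, div_self hne]
    simp [h1]
  | succ t ht ih =>
    set S := ∑ i ∈ Finset.Icc 1 t, lrW H t i / Real.sqrt i with hS
    set a := lr H (t + 1) with haa
    have haval : a = ((H : ℝ) + 1) / ((H : ℝ) + t + 1) := lr_succ_eq H t hH
    have hD : (0:ℝ) < (H : ℝ) + t + 1 := by positivity
    have ha0 : 0 ≤ a := by rw [haval]; positivity
    have ha1 : a ≤ 1 := by
      rw [haval, div_le_one hD]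
      have : (1:ℝ) ≤ (t:ℝ) := by exact_mod_cast ht
      linarith
    -- the recurrence for the sum
    have hsum : ∑ i ∈ Finset.Icc 1 (t + 1), lrW H (t + 1) i / Real.sqrt i
        = a / Real.sqrt (t + 1) + (1 - a) * S := by
      rw [Finset.sum_Icc_succ_top (by omega : 1 ≤ t + 1)]
      have htop : lrW H (t + 1) (t + 1) = a := by
        simp [lrW, haa]
      have hmid : ∀ i ∈ Finset.Icc 1 t,
          lrW H (t + 1) i / Real.sqrt i = (1 - a) * (lrW H t i / Real.sqrt i) := by
        intro i hi
        simp only [Finset.mem_Icc] at hi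
        have hi0 : i ≠ 0 := by omega
        simp only [lrW, if_neg hi0]
        rw [Finset.prod_Icc_succ_top (by omega : i + 1 ≤ t + 1)]
        ring
      rw [Finset.sum_congr rfl hmid, ← Finset.mul_sum, htop]
      push_cast
      ring
    rw [hsum]
    -- basic sqrt facts
    have hst : (0:ℝ) < Real.sqrt t := Real.sqrt_pos.mpr (by exact_mod_cast ht)
    have hst1 : (0:ℝ) < Real.sqrt ((t:ℝ) + 1) := Real.sqrt_pos.mpr (by positivity)
    have hmono : Real.sqrt t ≤ Real.sqrt ((t:ℝ) + 1) := Real.sqrt_le_sqrt (by linarith)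
    have hcast : ((t:ℝ) + 1) = ((t + 1 : ℕ) : ℝ) := by push_cast; ring
    rw [← hcast] at *
    have hs2 : Real.sqrt t ^ 2 = (t:ℝ) := Real.sq_sqrt (by positivity)
    have hs'2 : Real.sqrt ((t:ℝ) + 1) ^ 2 = (t:ℝ) + 1 := Real.sq_sqrt (by positivity)
    set s := Real.sqrt (t:ℝ)
    set s' := Real.sqrt ((t:ℝ) + 1)
    obtain ⟨ihl, ihu⟩ := ih
    constructor
    · -- lower bound
      have h1 : 1 / s' ≤ 1 / s := one_div_le_one_div_of_le hst hmono
      have h2 : (1 - a) * (1 / s') ≤ (1 - a) * S := by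
        apply mul_le_mul_of_nonneg_left _ (by linarith)
        linarith
      have : a / s' + (1 - a) * (1 / s') = 1 / s' := by field_simp; ring
      linarith
    · -- upper bound
      have h2 : (1 - a) * S ≤ (1 - a) * (2 / s) := by
        apply mul_le_mul_of_nonneg_left ihu (by linarith)
      have key : 2 * (1 - a) / s ≤ (2 - a) / s' := by
        rw [div_le_div_iff₀ hst hst1]
        have haD : (1 - a) * ((H:ℝ) + t + 1) = (t:ℝ) := by
          rw [haval]; field_simp; ring
        have hbD : (2 - a) * ((H:ℝ) + t + 1) = (H:ℝ) + 2 * t + 1 := by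
          rw [haval]; field_simp; ring
        have hkey : 2 * (t:ℝ) * s' ≤ ((H:ℝ) + 2 * t + 1) * s := by
          nlinarith [mul_nonneg hst.le (sq_nonneg (s - s')), sq_nonneg (s - s'), hst.le, hst1.le]
        nlinarith [hkey, haD, hbD, hD, hst.le, hst1.le]
      have hfin : a / s' + (2 - a) / s' = 2 / s' := by field_simp; ring
      have : (1 - a) * (2 / s) = 2 * (1 - a) / s := by ring
      linarith
end

section
/- Fix an integer H ≥ 1 and define α_t = (H+1)/(H+t) for integers t ≥ 1, α_t^0 = ∏_{j=1}^t (1 − α_j), and α_t^i = α_i · ∏_{j=i+1}^t (1 − α_j) for integers 1 ≤ i ≤ t (empty products equal 1). Then for every integer t ≥ 1: ∑_{i=1}^t (α_t^i)² ≤ 2H/t. -/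
open Finset

lemma lr_nonneg (H j : ℕ) : 0 ≤ lr H j := by
  unfold lr; positivity

lemma lr_le_one (H : ℕ) {j : ℕ} (hj : 1 ≤ j) : lr H j ≤ 1 := by
  unfold lr
  rw [div_le_one (by positivity)]
  have : (1:ℝ) ≤ j := by exact_mod_cast hj
  linarith

lemma lrW_nonneg (H t i : ℕ) (hi : 1 ≤ i) : 0 ≤ lrW H t i := by
  unfold lrW
  rw [if_neg (by omega)]
  apply mul_nonneg (lr_nonneg H i)
  apply Finset.prod_nonneg
  intro j hj
  simp only [Finset.mem_Icc] at hj
  linarith [lr_le_one H (show 1 ≤ j by omega)]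

lemma lrW_succ (H t i : ℕ) (hi : 1 ≤ i) (hit : i ≤ t) :
    lrW H (t + 1) i = lrW H t i * (1 - lr H (t + 1)) := by
  unfold lrW
  rw [if_neg (by omega), if_neg (by omega),
    Finset.prod_Icc_succ_top (by omega : i + 1 ≤ t + 1)]
  ring

lemma lrW_self (H t : ℕ) (ht : 1 ≤ t) : lrW H t t = lr H t := by
  unfold lrW
  rw [if_neg (by omega), Finset.Icc_eq_empty (by omega), Finset.prod_empty, mul_one]

lemma sum_lrW (H : ℕ) : ∀ t, 1 ≤ t → ∑ i ∈ Finset.Icc 1 t, lrW H t i = 1 := by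
  intro t
  induction t with
  | zero => omega
  | succ t ih =>
    intro _
    rcases Nat.eq_or_lt_of_le (show 1 ≤ t + 1 by omega) with h | h
    · -- t = 0
      have ht0 : t = 0 := by omega
      subst ht0
      simp only [Finset.Icc_self, Finset.sum_singleton, lrW, lr]
      norm_num
      exact (by positivity : (H:ℝ) + 1 ≠ 0)
    · have ht1 : 1 ≤ t := by omega
      rw [Finset.sum_Icc_succ_top (by omega : 1 ≤ t + 1),
        Finset.sum_congr rfl (fun i hi => by
          simp only [Finset.mem_Icc] at hi
          exact lrW_succ H t i hi.1 hi.2),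
        ← Finset.sum_mul, ih ht1, lrW_self H (t+1) (by omega)]
      ring

lemma lrW_le (H : ℕ) (hH : 1 ≤ H) : ∀ t, 1 ≤ t → ∀ i, 1 ≤ i → i ≤ t →
    lrW H t i ≤ 2 * H / t := by
  intro t
  induction t with
  | zero => omega
  | succ t ih =>
    intro _ i hi hit
    have hHr : (1:ℝ) ≤ H := by exact_mod_cast hH
    rcases Nat.eq_or_lt_of_le hit with h | h
    · subst h
      rw [lrW_self H (t + 1) (by omega)]
      unfold lr
      rw [div_le_div_iff₀ (by positivity) (by positivity)]
      push_cast
      nlinarith [mul_le_mul_of_nonneg_right hHr (show (0:ℝ) ≤ (t:ℝ) from Nat.cast_nonneg t)]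
    · have hit' : i ≤ t := by omega
      have ht1 : 1 ≤ t := by omega
      have htr : (1:ℝ) ≤ t := by exact_mod_cast ht1
      rw [lrW_succ H t i hi hit']
      have h1 : 1 - lr H (t + 1) = t / (H + t + 1) := by
        unfold lr
        push_cast
        field_simp
        ring
      have h2 : 0 ≤ 1 - lr H (t + 1) := by
        linarith [lr_le_one H (show 1 ≤ t + 1 by omega)]
      calc lrW H t i * (1 - lr H (t + 1))
          ≤ 2 * H / t * (1 - lr H (t + 1)) :=
            mul_le_mul_of_nonneg_right (ih ht1 i hi hit') h2
        _ ≤ 2 * H / ((t : ℝ) + 1) := by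
            rw [h1, div_mul_div_comm, div_le_div_iff₀ (by positivity) (by positivity)]
            nlinarith [mul_pos (mul_pos (show (0:ℝ) < 2 * H by positivity)
              (show (0:ℝ) < t by linarith)) (show (0:ℝ) < H by positivity)]
        _ = 2 * H / ((t + 1 : ℕ) : ℝ) := by norm_cast

/-- Property (3) of the learning-rate weights: for every `t ≥ 1`,
`∑_{i=1}^t (α_t^i)² ≤ 2H/t`. -/
theorem stmt_5 (H : ℕ) (hH : 1 ≤ H) (t : ℕ) (ht : 1 ≤ t) :
    ∑ i ∈ Finset.Icc 1 t, (lrW H t i) ^ 2 ≤ 2 * H / t := by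
  have key : ∑ i ∈ Finset.Icc 1 t, (lrW H t i) ^ 2
      ≤ ∑ i ∈ Finset.Icc 1 t, (2 * H / t) * lrW H t i := by
    apply Finset.sum_le_sum
    intro i hi
    simp only [Finset.mem_Icc] at hi
    have h1 := lrW_nonneg H t i hi.1
    have h2 := lrW_le H hH t ht i hi.1 hi.2
    nlinarith
  rw [← Finset.mul_sum, sum_lrW H t ht, mul_one] at key
  exact key
end

section
/- Fix an integer H ≥ 1 and define α_t = (H+1)/(H+t) for integers t ≥ 1, α_t^0 = ∏_{j=1}^t (1 − α_j), and α_t^i = α_i · ∏_{j=i+1}^t (1 − α_j) for integers 1 ≤ i ≤ t (empty products equal 1). Then for every integer i ≥ 1, the series ∑_{t=i}^∞ α_t^i converges and ∑_{t=i}^∞ α_t^i = 1 + 1/H. -/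
open Finset

section aux

variable (H i : ℕ)

/-- The product part of the weight. -/
noncomputable def lrC (n : ℕ) : ℝ := ∏ j ∈ Finset.Icc (i + 1) n, (1 - lr H j)

lemma one_sub_lr (hH : 1 ≤ H) (j : ℕ) (hj : 1 ≤ j) :
    1 - lr H j = ((j : ℝ) - 1) / (H + j) := by
  have hHj : (0:ℝ) < (H : ℝ) + j := by positivity
  unfold lr
  field_simp
  ring

lemma lrC_nonneg (hH : 1 ≤ H) (hi : 1 ≤ i) (n : ℕ) : 0 ≤ lrC H i n := by
  unfold lrC
  apply Finset.prod_nonneg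
  intro j hj
  have hj1 : 1 ≤ j := le_trans (le_trans hi (Nat.le_succ i)) (Finset.mem_Icc.mp hj).1
  rw [one_sub_lr H hH j hj1]
  have h1 : (1:ℝ) ≤ (j:ℝ) := by exact_mod_cast hj1
  have hHj : (0:ℝ) < (H : ℝ) + j := by positivity
  apply div_nonneg (by linarith) hHj.le

lemma lrC_self : lrC H i i = 1 := by
  unfold lrC
  rw [Finset.Icc_eq_empty (by omega), Finset.prod_empty]

lemma lrC_succ (hH : 1 ≤ H) (hi : 1 ≤ i) (n : ℕ) (hn : i ≤ n) :
    lrC H i (n + 1) = lrC H i n * ((n : ℝ) / ((H : ℝ) + n + 1)) := by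
  unfold lrC
  rw [Finset.prod_Icc_succ_top (by omega : i + 1 ≤ n + 1)]
  congr 1
  rw [one_sub_lr H hH (n+1) (by omega)]
  push_cast
  ring_nf

end aux

/-- Property (4) of the learning-rate weights: for every `i ≥ 1`, the series
`∑_{t=i}^∞ α_t^i` converges with sum `1 + 1/H`. -/
theorem stmt_6 (H : ℕ) (hH : 1 ≤ H) (i : ℕ) (hi : 1 ≤ i) :
    HasSum (fun t : ℕ => if i ≤ t then lrW H t i else 0) (1 + 1 / (H : ℝ)) := by
  have hH0 : (0:ℝ) < (H:ℝ) := by exact_mod_cast hH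
  have hHi : (0:ℝ) < (H:ℝ) + i := by positivity
  have hi0 : (0:ℝ) < (i:ℝ) := by exact_mod_cast hi
  set A : ℝ := lr H i with hA
  have hA0 : 0 < A := by
    rw [hA]; unfold lr; positivity
  set f : ℕ → ℝ := fun t : ℕ => if i ≤ t then lrW H t i else 0 with hf
  have hfnn : ∀ t, 0 ≤ f t := by
    intro t
    simp only [hf]
    split
    · unfold lrW
      rw [if_neg (by omega)]
      exact mul_nonneg hA0.le (lrC_nonneg H i hH hi t)
    · exact le_rfl
  -- partial sum formula
  have hsum : ∀ n, i ≤ n →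
      ∑ t ∈ Finset.range n, f t = (1 + 1/(H:ℝ)) - A * (((H:ℝ) + n) / H) * lrC H i n := by
    intro n hn
    induction n, hn using Nat.le_induction with
    | base =>
      have h1 : ∑ t ∈ Finset.range i, f t = 0 := by
        apply Finset.sum_eq_zero
        intro t ht
        have ht' := Finset.mem_range.mp ht
        simp only [hf]
        rw [if_neg (by omega)]
      rw [h1, lrC_self, hA]
      unfold lr
      field_simp
      ring
    | succ n hn ih =>
      rw [Finset.sum_range_succ, ih]
      have hfn : f n = A * lrC H i n := by
        simp only [hf]
        rw [if_pos hn]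
        unfold lrW lrC
        rw [if_neg (by omega)]
      rw [hfn, lrC_succ H i hH hi n hn]
      have hHn1 : (0:ℝ) < (H:ℝ) + n + 1 := by positivity
      push_cast
      field_simp
      ring
  -- bound on lrC
  have hbound : ∀ n, i ≤ n → lrC H i n ≤ ((i:ℝ) * (i+1)) / ((n:ℝ) * (n+1)) := by
    intro n hn
    induction n, hn using Nat.le_induction with
    | base =>
      rw [lrC_self]
      rw [div_self (by positivity)]
    | succ n hn ih =>
      have hn0 : (0:ℝ) < (n:ℝ) := by
        exact_mod_cast lt_of_lt_of_le hi hn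
      rw [lrC_succ H i hH hi n hn]
      have h1 : (n:ℝ) / ((H:ℝ) + n + 1) ≤ (n:ℝ) / ((n:ℝ) + 2) := by
        apply div_le_div_of_nonneg_left hn0.le (by positivity)
        have : (1:ℝ) ≤ (H:ℝ) := by exact_mod_cast hH
        linarith
      have h2 : lrC H i n * ((n:ℝ) / ((H:ℝ) + n + 1)) ≤
          (((i:ℝ) * (i+1)) / ((n:ℝ) * (n+1))) * ((n:ℝ) / ((n:ℝ)+2)) := by
        apply mul_le_mul ih h1 (by positivity)
        positivity
      refine h2.trans (le_of_eq ?_)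
      push_cast
      field_simp
      ring
  -- tendsto of the remainder to 0
  have htend0 : Filter.Tendsto (fun n : ℕ => A * (((H:ℝ) + n) / H) * lrC H i n)
      Filter.atTop (nhds 0) := by
    have hC : (0:ℝ) < A * ((i:ℝ) * (i+1)) * ((H:ℝ)+1) / H := by positivity
    apply squeeze_zero' (g := fun n : ℕ => (A * ((i:ℝ) * (i+1)) * ((H:ℝ)+1) / H) * (1/((n:ℝ)+1)))
    · filter_upwards with n
      have := lrC_nonneg H i hH hi n
      have : (0:ℝ) ≤ (H:ℝ) + n := by positivity
      positivity
    · filter_upwards [Filter.eventually_ge_atTop i] with n hn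
      have hn0 : (0:ℝ) < (n:ℝ) := by exact_mod_cast lt_of_lt_of_le hi hn
      have hb := hbound n hn
      calc A * (((H:ℝ) + n) / H) * lrC H i n
          ≤ A * (((H:ℝ) + n) / H) * (((i:ℝ) * (i+1)) / ((n:ℝ) * (n+1))) := by
            apply mul_le_mul_of_nonneg_left hb (by positivity)
        _ ≤ (A * ((i:ℝ) * (i+1)) * ((H:ℝ)+1) / H) * (1/((n:ℝ)+1)) := by
            have h1n : (1:ℝ) ≤ (n:ℝ) := by exact_mod_cast le_trans hi hn
            have hHn : (H:ℝ) + n ≤ ((H:ℝ)+1) * n := by nlinarith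
            have key : A * (((H:ℝ)+n)/H) * ((i:ℝ)*(i+1)/((n:ℝ)*(n+1)))
                = A * ((H:ℝ)+n) * ((i:ℝ)*(i+1)) / ((H:ℝ)*((n:ℝ)*((n:ℝ)+1))) := by
              field_simp
            have key2 : A * ((i:ℝ)*(i+1)) * ((H:ℝ)+1)/H * (1/((n:ℝ)+1))
                = A * (((H:ℝ)+1)*n) * ((i:ℝ)*(i+1)) / ((H:ℝ)*((n:ℝ)*((n:ℝ)+1))) := by
              field_simp
            rw [key, key2]
            gcongr
    · have h1 : Filter.Tendsto (fun n : ℕ => 1/((n:ℝ)+1)) Filter.atTop (nhds 0) :=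
        tendsto_one_div_add_atTop_nhds_zero_nat
      simpa using h1.const_mul (A * ((i:ℝ) * (i+1)) * ((H:ℝ)+1) / H)
  -- conclude
  rw [hasSum_iff_tendsto_nat_of_nonneg hfnn]
  have heq : (fun n : ℕ => (1 + 1/(H:ℝ)) - A * (((H:ℝ) + n) / H) * lrC H i n) =ᶠ[Filter.atTop]
      (fun n : ℕ => ∑ t ∈ Finset.range n, f t) := by
    filter_upwards [Filter.eventually_ge_atTop i] with n hn
    exact (hsum n hn).symm
  have := (tendsto_const_nhds.sub htend0).congr' heq
  simpa using this
end

section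
/- Let (σ_n)_{n≥1} be independent, identically distributed real-valued random variables taking values in [0, 1] almost surely, with common mean p. Let C ≥ 1 be a real number, δ ∈ (0, C], and c ≥ 1 a real number. Then P( ∃ n ≥ 1 : |(1/n)·∑_{i=1}^n σ_i − p| > √(c·log(C·n/δ)/n) ) ≤ 4·(δ/C)². -/
open MeasureTheory ProbabilityTheory
open Real


/-- Hoeffding's lemma, analytic core. -/
lemma hoeffding_core {p : ℝ} (hp0 : 0 ≤ p) (hp1 : p ≤ 1) (t : ℝ) :
    1 - p + p * exp t ≤ exp (t * p + t ^ 2 / 8) := by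
  set g : ℝ → ℝ := fun t => 1 - p + p * exp t with hg_def
  have hg : ∀ s : ℝ, 0 < g s := by
    intro s
    rcases eq_or_lt_of_le hp1 with h1 | h1
    · simp only [hg_def, h1]; simpa using exp_pos s
    · have : 0 < 1 - p := by linarith
      have : 0 ≤ p * exp s := mul_nonneg hp0 (exp_pos s).le
      simp only [hg_def]; linarith
  set f : ℝ → ℝ := fun t => t * p + t ^ 2 / 8 - Real.log (g t) with hf_def
  set φ : ℝ → ℝ := fun t => p + t / 4 - p * exp t / g t with hφ_def
  have hgd : ∀ s : ℝ, HasDerivAt g (p * exp s) s := by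
    intro s
    exact ((Real.hasDerivAt_exp s).const_mul p).const_add (1 - p)
  have hfd : ∀ s : ℝ, HasDerivAt f (φ s) s := by
    intro s
    have h1 : HasDerivAt (fun u : ℝ => u * p) p s := by
      simpa using (hasDerivAt_id s).mul_const p
    have h2 : HasDerivAt (fun u : ℝ => u ^ 2 / 8) (s / 4) s := by
      have := (hasDerivAt_pow 2 s).div_const 8
      exact this.congr_deriv (by rw [show (2:ℕ) - 1 = 1 from rfl]; push_cast; ring)
    have h3 : HasDerivAt (fun u : ℝ => Real.log (g u)) (p * exp s / g s) s :=
      (hgd s).log (hg s).ne'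
    exact (h1.add h2).sub h3
  have hφd : ∀ s : ℝ, HasDerivAt φ
      ((0 + 1 / 4) - ((p * exp s * g s - p * exp s * (p * exp s)) / (g s) ^ 2)) s := by
    intro s
    have h1 : HasDerivAt (fun u : ℝ => p + u / 4) (0 + 1 / 4) s := by
      exact (hasDerivAt_const s p).add ((hasDerivAt_id s).div_const 4)
    have h2 : HasDerivAt (fun u : ℝ => p * exp u / g u)
        ((p * exp s * g s - p * exp s * (p * exp s)) / (g s) ^ 2) s :=
      ((Real.hasDerivAt_exp s).const_mul p).div (hgd s) (hg s).ne'
    exact h1.sub h2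
  have hψ : ∀ s : ℝ, 0 ≤ (0 + 1 / 4) - ((p * exp s * g s - p * exp s * (p * exp s)) / (g s) ^ 2) := by
    intro s
    rw [sub_nonneg, div_le_iff₀ (pow_pos (hg s) 2)]
    have hes := (exp_pos s).le
    have hgs : g s = 1 - p + p * exp s := rfl
    nlinarith [sq_nonneg ((1 - p) - p * exp s), mul_nonneg hp0 hes]
  have hφmono : Monotone φ := by
    refine monotone_of_deriv_nonneg (fun s => (hφd s).differentiableAt) fun s => ?_
    rw [(hφd s).deriv]; exact hψ s
  have hφ0 : φ 0 = 0 := by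
    simp [hφ_def, hg_def]
  have hf0 : f 0 = 0 := by
    simp [hf_def, hg_def]
  have key : 0 ≤ f t := by
    rcases le_total 0 t with ht | ht
    · have hmono : MonotoneOn f (Set.Ici (0:ℝ)) := by
        refine monotoneOn_of_deriv_nonneg (convex_Ici 0)
          (fun s _ => (hfd s).differentiableAt.continuousAt.continuousWithinAt)
          (fun s _ => (hfd s).differentiableAt.differentiableWithinAt) fun s hs => ?_
        rw [(hfd s).deriv]
        rw [interior_Ici] at hs
        have := hφmono (le_of_lt hs)
        rwa [hφ0] at this
      have := hmono (Set.self_mem_Ici) (Set.mem_Ici.2 ht) ht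
      rwa [hf0] at this
    · have hmono : AntitoneOn f (Set.Iic (0:ℝ)) := by
        refine antitoneOn_of_deriv_nonpos (convex_Iic 0)
          (fun s _ => (hfd s).differentiableAt.continuousAt.continuousWithinAt)
          (fun s _ => (hfd s).differentiableAt.differentiableWithinAt) fun s hs => ?_
        rw [(hfd s).deriv]
        rw [interior_Iic] at hs
        have := hφmono (le_of_lt hs)
        rwa [hφ0] at this
      have := hmono (Set.mem_Iic.2 ht) (Set.self_mem_Iic) ht
      rwa [hf0] at this
  have hlog : Real.log (g t) ≤ t * p + t ^ 2 / 8 := by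
    have : 0 ≤ t * p + t ^ 2 / 8 - Real.log (g t) := key
    linarith
  calc 1 - p + p * exp t = g t := rfl
    _ = exp (Real.log (g t)) := (exp_log (hg t)).symm
    _ ≤ exp (t * p + t ^ 2 / 8) := exp_le_exp.2 hlog


lemma mgf_aux {Ω : Type*} [MeasurableSpace Ω] (μ : Measure Ω) [IsProbabilityMeasure μ]
    {X : Ω → ℝ} (hX : Measurable X) (hb : ∀ᵐ ω ∂μ, X ω ∈ Set.Icc (0 : ℝ) 1)
    {p : ℝ} (hp : ∫ ω, X ω ∂μ = p) (t : ℝ) :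
    Integrable (fun ω => exp (t * X ω)) μ ∧ mgf X μ t ≤ exp (t * p + t ^ 2 / 8) := by
  have hXint : Integrable X μ := by
    refine (integrable_const (1 : ℝ)).mono' hX.aestronglyMeasurable ?_
    filter_upwards [hb] with ω hω
    rw [Real.norm_eq_abs, abs_le]; exact ⟨by linarith [hω.1], hω.2⟩
  have hint : Integrable (fun ω => exp (t * X ω)) μ := by
    refine (integrable_const (exp |t|)).mono'
      ((hX.const_mul t).exp).aestronglyMeasurable ?_
    filter_upwards [hb] with ω hω
    rw [Real.norm_eq_abs, abs_of_pos (exp_pos _), exp_le_exp]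
    calc t * X ω ≤ |t * X ω| := le_abs_self _
      _ = |t| * |X ω| := abs_mul _ _
      _ ≤ |t| * 1 := by
          refine mul_le_mul_of_nonneg_left ?_ (abs_nonneg t)
          rw [abs_le]; exact ⟨by linarith [hω.1], hω.2⟩
      _ = |t| := mul_one _
  refine ⟨hint, ?_⟩
  have hp0 : 0 ≤ p := by
    rw [← hp]
    refine integral_nonneg_of_ae ?_
    filter_upwards [hb] with ω hω using hω.1
  have hp1 : p ≤ 1 := by
    rw [← hp]
    calc ∫ ω, X ω ∂μ ≤ ∫ _, (1 : ℝ) ∂μ := by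
          refine integral_mono_ae hXint (integrable_const 1) ?_
          filter_upwards [hb] with ω hω using hω.2
      _ = 1 := by simp
  have hrhs : Integrable (fun ω => 1 - X ω + X ω * exp t) μ :=
    ((integrable_const (1:ℝ)).sub hXint).add (hXint.mul_const _)
  have hptw : ∀ᵐ ω ∂μ, exp (t * X ω) ≤ 1 - X ω + X ω * exp t := by
    filter_upwards [hb] with ω hω
    have hc := convexOn_exp.2 (Set.mem_univ (0:ℝ)) (Set.mem_univ t)
      (by linarith [hω.2] : (0:ℝ) ≤ 1 - X ω) hω.1 (by ring)
    simp only [smul_eq_mul, mul_zero, zero_add, exp_zero, mul_one] at hc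
    calc exp (t * X ω) = exp (X ω * t) := by rw [mul_comm]
      _ ≤ (1 - X ω) * 1 + X ω * exp t := by simpa using hc
      _ = 1 - X ω + X ω * exp t := by ring
  calc mgf X μ t = ∫ ω, exp (t * X ω) ∂μ := rfl
    _ ≤ ∫ ω, (1 - X ω + X ω * exp t) ∂μ := integral_mono_ae hint hrhs hptw
    _ = 1 - p + p * exp t := by
        have h1 : Integrable (fun ω => 1 - X ω) μ := (integrable_const 1).sub hXint
        have h2 : Integrable (fun ω => X ω * exp t) μ := hXint.mul_const _
        have h3 : Integrable (fun _ : Ω => (1:ℝ)) μ := integrable_const 1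
        rw [integral_add h1 h2, integral_sub h3 hXint, integral_mul_const, hp]
        simp
    _ ≤ exp (t * p + t ^ 2 / 8) := hoeffding_core hp0 hp1 t

lemma tail_bound {Ω : Type*} [MeasurableSpace Ω] (μ : Measure Ω) [IsProbabilityMeasure μ]
    (σ : ℕ → Ω → ℝ) (hmeas : ∀ i, Measurable (σ i))
    (hindep : iIndepFun σ μ)
    (hbdd : ∀ i, ∀ᵐ ω ∂μ, σ i ω ∈ Set.Icc (0 : ℝ) 1)
    (p : ℝ) (hmean : ∀ i, ∫ ω, σ i ω ∂μ = p)
    (n : ℕ) (ε : ℝ) (hε : 0 ≤ ε) :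
    μ {ω | (n : ℝ) * p + n * ε ≤ (∑ i ∈ Finset.range n, σ i) ω}
      + μ {ω | (∑ i ∈ Finset.range n, σ i) ω ≤ (n : ℝ) * p - n * ε}
      ≤ ENNReal.ofReal (2 * exp (-(2 * n * ε ^ 2))) := by
  have hmgf : ∀ t : ℝ, Integrable (fun ω => exp (t * (∑ i ∈ Finset.range n, σ i) ω)) μ ∧
      mgf (∑ i ∈ Finset.range n, σ i) μ t ≤ exp (n * (t * p + t ^ 2 / 8)) := by
    intro t
    constructor
    · exact hindep.integrable_exp_mul_sum hmeas
        (fun i _ => (mgf_aux μ (hmeas i) (hbdd i) (hmean i) t).1)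
    · rw [hindep.mgf_sum hmeas]
      calc ∏ i ∈ Finset.range n, mgf (σ i) μ t
          ≤ ∏ _i ∈ Finset.range n, exp (t * p + t ^ 2 / 8) :=
            Finset.prod_le_prod (fun i _ => mgf_nonneg)
              (fun i _ => (mgf_aux μ (hmeas i) (hbdd i) (hmean i) t).2)
        _ = exp (n * (t * p + t ^ 2 / 8)) := by
            rw [Finset.prod_const, ← Real.exp_nat_mul]; simp [mul_comm]
  have hup : (μ {ω | (n : ℝ) * p + n * ε ≤ (∑ i ∈ Finset.range n, σ i) ω}).toReal
      ≤ exp (-(2 * n * ε ^ 2)) := by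
    have h := measure_ge_le_exp_mul_mgf (μ := μ) (X := ∑ i ∈ Finset.range n, σ i)
      (t := 4 * ε) ((n : ℝ) * p + n * ε) (by linarith) (hmgf (4 * ε)).1
    calc (μ {ω | (n : ℝ) * p + n * ε ≤ (∑ i ∈ Finset.range n, σ i) ω}).toReal
        ≤ exp (-(4 * ε) * ((n : ℝ) * p + n * ε)) * mgf (∑ i ∈ Finset.range n, σ i) μ (4 * ε) := h
      _ ≤ exp (-(4 * ε) * ((n : ℝ) * p + n * ε)) * exp (n * ((4 * ε) * p + (4 * ε) ^ 2 / 8)) :=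
          mul_le_mul_of_nonneg_left (hmgf (4 * ε)).2 (exp_pos _).le
      _ = exp (-(2 * n * ε ^ 2)) := by rw [← Real.exp_add]; ring_nf
  have hlo : (μ {ω | (∑ i ∈ Finset.range n, σ i) ω ≤ (n : ℝ) * p - n * ε}).toReal
      ≤ exp (-(2 * n * ε ^ 2)) := by
    have h := measure_le_le_exp_mul_mgf (μ := μ) (X := ∑ i ∈ Finset.range n, σ i)
      (t := -(4 * ε)) ((n : ℝ) * p - n * ε) (by linarith) (hmgf (-(4 * ε))).1
    calc (μ {ω | (∑ i ∈ Finset.range n, σ i) ω ≤ (n : ℝ) * p - n * ε}).toReal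
        ≤ exp (-(-(4 * ε)) * ((n : ℝ) * p - n * ε)) * mgf (∑ i ∈ Finset.range n, σ i) μ (-(4 * ε)) := h
      _ ≤ exp (-(-(4 * ε)) * ((n : ℝ) * p - n * ε)) * exp (n * ((-(4 * ε)) * p + (-(4 * ε)) ^ 2 / 8)) :=
          mul_le_mul_of_nonneg_left (hmgf (-(4 * ε))).2 (exp_pos _).le
      _ = exp (-(2 * n * ε ^ 2)) := by rw [← Real.exp_add]; ring_nf
  have h1 : μ {ω | (n : ℝ) * p + n * ε ≤ (∑ i ∈ Finset.range n, σ i) ω}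
      ≤ ENNReal.ofReal (exp (-(2 * n * ε ^ 2))) := by
    rw [← ENNReal.ofReal_toReal (measure_ne_top μ _)]
    exact ENNReal.ofReal_le_ofReal hup
  have h2 : μ {ω | (∑ i ∈ Finset.range n, σ i) ω ≤ (n : ℝ) * p - n * ε}
      ≤ ENNReal.ofReal (exp (-(2 * n * ε ^ 2))) := by
    rw [← ENNReal.ofReal_toReal (measure_ne_top μ _)]
    exact ENNReal.ofReal_le_ofReal hlo
  calc _ ≤ ENNReal.ofReal (exp (-(2 * n * ε ^ 2))) + ENNReal.ofReal (exp (-(2 * n * ε ^ 2))) :=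
        add_le_add h1 h2
    _ = ENNReal.ofReal (2 * exp (-(2 * n * ε ^ 2))) := by
        rw [← ENNReal.ofReal_add (exp_pos _).le (exp_pos _).le]; ring_nf


/-- Anytime confidence bound underlying the concentration lemma (Lemma 4):
for i.i.d. `[0,1]`-valued random variables `σ_i` with mean `p`, constants
`C ≥ 1`, `δ ∈ (0, C]`, `c ≥ 1`, the probability that the empirical mean of
the first `n` variables ever deviates from `p` by more than
`√(c log(C n/δ)/n)` for some `n ≥ 1` is at most `4 (δ/C)²`. -/
theorem stmt_13 {Ω : Type*} [MeasurableSpace Ω] (μ : Measure Ω) [IsProbabilityMeasure μ]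
    (σ : ℕ → Ω → ℝ) (hmeas : ∀ i, Measurable (σ i))
    (hindep : iIndepFun σ μ)
    (hid : ∀ i j, IdentDistrib (σ i) (σ j) μ μ)
    (hbdd : ∀ i, ∀ᵐ ω ∂μ, σ i ω ∈ Set.Icc (0 : ℝ) 1)
    (p : ℝ) (hmean : ∀ i, ∫ ω, σ i ω ∂μ = p)
    (C δ c : ℝ) (hC : 1 ≤ C) (hδ0 : 0 < δ) (hδC : δ ≤ C) (hc : 1 ≤ c) :
    μ {ω | ∃ n : ℕ, 1 ≤ n ∧
        Real.sqrt (c * Real.log (C * n / δ) / n) <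
          |(1 / n : ℝ) * ∑ i ∈ Finset.range n, σ i ω - p|} ≤
      ENNReal.ofReal (4 * (δ / C) ^ 2) := by
  set K : ℝ := (δ / C) ^ 2 with hK_def
  have hK0 : 0 ≤ K := sq_nonneg _
  set G : ℕ → ℝ := fun n => if n = 0 then 0 else 4 * K / n - 4 * K / (n + 1) with hG_def
  have hG0 : ∀ n, 0 ≤ G n := by
    intro n
    rcases Nat.eq_zero_or_pos n with h | h
    · simp [hG_def, h]
    · have hn1 : (1 : ℝ) ≤ n := by exact_mod_cast h
      simp only [hG_def, if_neg h.ne']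
      rw [sub_nonneg]
      apply div_le_div_of_nonneg_left (by linarith) (by linarith) (by linarith)
  -- the events
  set A : ℕ → Set Ω := fun n => {ω | 1 ≤ n ∧
      Real.sqrt (c * Real.log (C * n / δ) / n) <
        |(1 / n : ℝ) * ∑ i ∈ Finset.range n, σ i ω - p|} with hA_def
  have hEA : {ω | ∃ n : ℕ, 1 ≤ n ∧
        Real.sqrt (c * Real.log (C * n / δ) / n) <
          |(1 / n : ℝ) * ∑ i ∈ Finset.range n, σ i ω - p|} = ⋃ n, A n := by
    ext ω; simp [hA_def]
  -- per-n bound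
  have hAn : ∀ n, μ (A n) ≤ ENNReal.ofReal (G n) := by
    intro n
    rcases Nat.eq_zero_or_pos n with h | h
    · have : A n = ∅ := by
        ext ω; simp [hA_def, h]
      simp [this]
    · have hn1 : (1 : ℝ) ≤ (n : ℝ) := by exact_mod_cast h
      have hn0 : (0 : ℝ) < n := by linarith
      set ε : ℝ := Real.sqrt (c * Real.log (C * n / δ) / n) with hε_def
      have hε0 : 0 ≤ ε := Real.sqrt_nonneg _
      have hCn1 : 1 ≤ C * n / δ := by
        rw [le_div_iff₀ hδ0]
        calc 1 * δ = δ := one_mul δ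
          _ ≤ C := hδC
          _ = C * 1 := (mul_one C).symm
          _ ≤ C * n := by nlinarith
      have hL0 : 0 ≤ Real.log (C * n / δ) := Real.log_nonneg hCn1
      have harg : 0 ≤ c * Real.log (C * n / δ) / n := by positivity
      have hε2 : ε ^ 2 = c * Real.log (C * n / δ) / n := Real.sq_sqrt harg
      -- inclusion
      have hsub : A n ⊆ {ω | (n : ℝ) * p + n * ε ≤ (∑ i ∈ Finset.range n, σ i) ω}
          ∪ {ω | (∑ i ∈ Finset.range n, σ i) ω ≤ (n : ℝ) * p - n * ε} := by
        intro ω hω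
        have hω2 : ε < |(1 / n : ℝ) * ∑ i ∈ Finset.range n, σ i ω - p| := hω.2
        set S := ∑ i ∈ Finset.range n, σ i ω with hS_def
        have hSapp : (∑ i ∈ Finset.range n, σ i) ω = S := by
          simp [hS_def, Finset.sum_apply]
        have habs : (n : ℝ) * ε < |S - n * p| := by
          have hrw : (n : ℝ) * ((1 / n : ℝ) * S - p) = S - n * p := by field_simp
          calc (n : ℝ) * ε < n * |(1 / n : ℝ) * S - p| := (mul_lt_mul_iff_right₀ hn0).2 hω2
            _ = |n * ((1 / n : ℝ) * S - p)| := by rw [abs_mul, abs_of_pos hn0]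
            _ = |S - n * p| := by rw [hrw]
        rcases abs_cases (S - n * p) with ⟨heq, _⟩ | ⟨heq, _⟩
        · left
          rw [Set.mem_setOf_eq, hSapp]
          rw [heq] at habs; linarith
        · right
          rw [Set.mem_setOf_eq, hSapp]
          rw [heq] at habs; linarith
      have hbound := tail_bound μ σ hmeas hindep hbdd p hmean n ε hε0
      have h2 : 2 * exp (-(2 * n * ε ^ 2)) ≤ G n := by
        have hnε : (n : ℝ) * ε ^ 2 = c * Real.log (C * n / δ) := by
          rw [hε2]; field_simp
        have hexp : exp (-(2 * n * ε ^ 2)) ≤ (δ / (C * n)) ^ 2 := by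
          have h1 : exp (-(2 * n * ε ^ 2)) ≤ exp (-(2 * Real.log (C * n / δ))) := by
            rw [exp_le_exp, neg_le_neg_iff]
            calc 2 * Real.log (C * n / δ) = 2 * (1 * Real.log (C * n / δ)) := by ring
              _ ≤ 2 * (c * Real.log (C * n / δ)) := by nlinarith
              _ = 2 * n * ε ^ 2 := by rw [← hnε]; ring
          have hpos : (0 : ℝ) < C * n / δ := by positivity
          have h2' : exp (-(2 * Real.log (C * n / δ))) = (δ / (C * n)) ^ 2 := by
            rw [show -(2 * Real.log (C * n / δ)) = 2 * Real.log ((C * n / δ)⁻¹) by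
              rw [Real.log_inv]; ring]
            rw [show (2 : ℝ) * Real.log ((C * n / δ)⁻¹) = Real.log (((C * n / δ)⁻¹) ^ 2) by
              rw [Real.log_pow]; push_cast; ring]
            rw [Real.exp_log (by positivity)]
            congr 1
            field_simp
          linarith [h1, h2'.le]
        have hfrac : (δ / (C * n)) ^ 2 = K / n ^ 2 := by
          rw [hK_def, div_pow, div_pow, mul_pow]
          rw [div_div]
        have hfinal : 2 * (K / n ^ 2) ≤ G n := by
          have e1 : G n = 4 * K / ((n : ℝ) * (n + 1)) := by
            simp only [hG_def, if_neg h.ne']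
            field_simp
            ring
          have e2 : 2 * (K / (n : ℝ) ^ 2) = 2 * K / (n : ℝ) ^ 2 := by ring
          rw [e1, e2, div_le_div_iff₀ (by positivity) (by positivity)]
          nlinarith [mul_nonneg hK0 (mul_nonneg (by linarith : (0:ℝ) ≤ (n:ℝ))
            (by linarith : (0:ℝ) ≤ (n:ℝ) - 1))]
        calc 2 * exp (-(2 * n * ε ^ 2)) ≤ 2 * (δ / (C * n)) ^ 2 := by linarith
          _ = 2 * (K / n ^ 2) := by rw [hfrac]
          _ ≤ G n := hfinal
      calc μ (A n) ≤ μ ({ω | (n : ℝ) * p + n * ε ≤ (∑ i ∈ Finset.range n, σ i) ω}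
            ∪ {ω | (∑ i ∈ Finset.range n, σ i) ω ≤ (n : ℝ) * p - n * ε}) := measure_mono hsub
        _ ≤ μ {ω | (n : ℝ) * p + n * ε ≤ (∑ i ∈ Finset.range n, σ i) ω}
            + μ {ω | (∑ i ∈ Finset.range n, σ i) ω ≤ (n : ℝ) * p - n * ε} := measure_union_le _ _
        _ ≤ ENNReal.ofReal (2 * exp (-(2 * n * ε ^ 2))) := hbound
        _ ≤ ENNReal.ofReal (G n) := ENNReal.ofReal_le_ofReal h2
  -- sum the bounds
  have hsumG : ∀ N : ℕ, ∑ n ∈ Finset.range N, G n ≤ 4 * K := by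
    have hform : ∀ N : ℕ, ∑ n ∈ Finset.range (N + 1), G n = 4 * K - 4 * K / (N + 1) := by
      intro N
      induction N with
      | zero => simp [hG_def]
      | succ M ih =>
        rw [Finset.sum_range_succ, ih]
        simp only [hG_def, if_neg (Nat.succ_ne_zero M)]
        push_cast
        ring
    intro N
    cases N with
    | zero =>
      simp only [Finset.range_zero, Finset.sum_empty]
      positivity
    | succ M =>
      rw [hform M]
      have : 0 ≤ 4 * K / (M + 1 : ℝ) := by positivity
      linarith
  rw [hEA]
  calc μ (⋃ n, A n) ≤ ∑' n, μ (A n) := measure_iUnion_le A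
    _ ≤ ∑' n, ENNReal.ofReal (G n) := ENNReal.tsum_le_tsum hAn
    _ ≤ ENNReal.ofReal (4 * K) := by
        rw [ENNReal.tsum_eq_iSup_sum]
        refine iSup_le fun s => ?_
        obtain ⟨N, hN⟩ := s.exists_nat_subset_range
        calc ∑ n ∈ s, ENNReal.ofReal (G n)
            ≤ ∑ n ∈ Finset.range N, ENNReal.ofReal (G n) :=
              Finset.sum_le_sum_of_subset hN
          _ = ENNReal.ofReal (∑ n ∈ Finset.range N, G n) :=
              (ENNReal.ofReal_sum_of_nonneg (fun n _ => hG0 n)).symm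
          _ ≤ ENNReal.ofReal (4 * K) := ENNReal.ofReal_le_ofReal (hsumG N)
end
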